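/- The group GL^+(2,R) of invertible 2×2 real matrices with positive determinant is circularly orderable, i.e., it admits a left-invariant circular order. -/

import Mathlib

/-- A left-invariant circular order on a group `G`: values `±1` on pairwise distinct triples,
`0` on degenerate triples, satisfying the cocycle condition and left-invariance. -/
def IsLeftCircularOrder {G : Type*} [Group G] (e : G → G → G → ℤ) : Prop :=
  (∀ a b c : G, a ≠ b → b ≠ c → a ≠ c → e a b c = 1 ∨ e a b c = -1) ∧
  (∀ a b c : G, a = b ∨ b = c ∨ a = c → e a b c = 0) ∧
  (∀ g₀ g₁ g₂ g₃ : G, e g₁ g₂ g₃ - e g₀ g₂ g₃ + e g₀ g₁ g₃ - e g₀ g₁ g₂ = 0) ∧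
  (∀ g a b c : G, a ≠ b → b ≠ c → a ≠ c → e (g * a) (g * b) (g * c) = e a b c)

/-- A group is circularly orderable if it admits a left-invariant circular order. -/
def CircularlyOrderable (G : Type*) [Group G] : Prop :=
  ∃ e : G → G → G → ℤ, IsLeftCircularOrder e



section CircGL
noncomputable section
open Matrix Real Complex

def cyc {α : Type*} [LT α] (a b c : α) : Prop := (a<b ∧ b<c) ∨ (b<c ∧ c<a) ∨ (c<a ∧ a<b)

open Classical in
def eZ (x y z : ℤ) : ℤ := if x = y ∨ y = z ∨ x = z then 0 else if cyc x y z then 1 else -1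

lemma eZ_quad (a b c d : ℤ) : eZ b c d - eZ a c d + eZ a b d - eZ a b c = 0 := by
  unfold eZ cyc; split_ifs <;> omega

lemma cyc_rot {α : Type*} [LT α] (a b c : α) : cyc a b c ↔ cyc b c a := by
  unfold cyc; tauto

lemma cyc_total {α : Type*} [LinearOrder α] {a b c : α} (hab : a ≠ b) (hbc : b ≠ c)
    (hac : a ≠ c) : cyc a b c ∨ cyc a c b := by
  unfold cyc
  rcases hab.lt_or_gt with h1|h1 <;> rcases hbc.lt_or_gt with h2|h2 <;>
    rcases hac.lt_or_gt with h3|h3 <;> tauto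

-- lex lemmas
lemma lex_lt_iff {α β : Type*} [LinearOrder α] [LinearOrder β] (x1 x2 : α) (t1 t2 : β) :
    toLex (x1, t1) < toLex (x2, t2) ↔ x1 < x2 ∨ (x1 = x2 ∧ t1 < t2) := Prod.Lex.lt_iff

lemma cyc_lex_of_ne {α β : Type*} [LinearOrder α] [LinearOrder β] {x1 x2 x3 : α} (t1 t2 t3 : β)
    (h12 : x1 ≠ x2) (h23 : x2 ≠ x3) (h13 : x1 ≠ x3) :
    cyc (toLex (x1, t1)) (toLex (x2, t2)) (toLex (x3, t3)) ↔ cyc x1 x2 x3 := by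
  unfold cyc
  simp [Prod.Lex.lt_iff, h12, h23, h13, h12.symm, h23.symm, h13.symm]

lemma cyc_lex_pair {α β : Type*} [LinearOrder α] [LinearOrder β] {x1 x3 : α} (t1 t2 t3 : β)
    (h13 : x1 ≠ x3) :
    cyc (toLex (x1, t1)) (toLex (x1, t2)) (toLex (x3, t3)) ↔ t1 < t2 := by
  unfold cyc
  rcases h13.lt_or_gt with h|h <;>
    simp [Prod.Lex.lt_iff, h13, h13.symm, h, h.asymm, lt_irrefl] <;> tauto

lemma cyc_lex_all {α β : Type*} [LinearOrder α] [LinearOrder β] {x1 : α} (t1 t2 t3 : β) :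
    cyc (toLex (x1, t1)) (toLex (x1, t2)) (toLex (x1, t3)) ↔ cyc t1 t2 t3 := by
  unfold cyc; simp [Prod.Lex.lt_iff]
open Classical in
def eK {α : Type*} [LinearOrder α] (x y z : α) : ℤ :=
  if x = y ∨ y = z ∨ x = z then 0 else if cyc x y z then 1 else -1

section
variable {α : Type*} [LinearOrder α]

open Classical in
def ind (k x : α) : ℤ := if k ≤ x then 1 else 0

lemma ind_mono {k x y : α} (h : x ≤ y) : ind k x ≤ ind k y := by
  unfold ind
  by_cases hk : k ≤ x
  · rw [if_pos hk, if_pos (hk.trans h)]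
  · rw [if_neg hk]; split_ifs <;> norm_num

def rank4 (a b c d x : α) : ℤ := ind a x + ind b x + ind c x + ind d x

lemma rank4_mono {a b c d x y : α} (h : x ≤ y) : rank4 a b c d x ≤ rank4 a b c d y := by
  have := ind_mono (k := a) h; have := ind_mono (k := b) h
  have := ind_mono (k := c) h; have := ind_mono (k := d) h
  unfold rank4; omega

lemma rank4_strict {a b c d x y : α} (h : x < y) (hy : y = a ∨ y = b ∨ y = c ∨ y = d) :
    rank4 a b c d x < rank4 a b c d y := by
  have hyx : ind y x = 0 := by unfold ind; rw [if_neg (not_le.mpr h)]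
  have hyy : ind y y = 1 := by unfold ind; rw [if_pos le_rfl]
  have m1 := ind_mono (k := a) h.le; have m2 := ind_mono (k := b) h.le
  have m3 := ind_mono (k := c) h.le; have m4 := ind_mono (k := d) h.le
  unfold rank4 at *
  rcases hy with rfl|rfl|rfl|rfl <;> omega

lemma rank4_iff {a b c d x y : α} (hx : x = a ∨ x = b ∨ x = c ∨ x = d)
    (hy : y = a ∨ y = b ∨ y = c ∨ y = d) :
    (x < y ↔ rank4 a b c d x < rank4 a b c d y) ∧ (x = y ↔ rank4 a b c d x = rank4 a b c d y) := by
  constructor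
  · constructor
    · exact fun h => rank4_strict h hy
    · intro h
      rcases lt_trichotomy x y with h'|h'|h'
      · exact h'
      · exact absurd h (by rw [h']; exact lt_irrefl _)
      · exact absurd h (not_lt.mpr (rank4_strict h' hx).le)
  · constructor
    · intro h; rw [h]
    · intro h
      rcases lt_trichotomy x y with h'|h'|h'
      · exact absurd h (rank4_strict h' hy).ne
      · exact h'
      · exact absurd h.symm (rank4_strict h' hx).ne

lemma eK_rank (a b c d x y z : α) (hx : x = a ∨ x = b ∨ x = c ∨ x = d)
    (hy : y = a ∨ y = b ∨ y = c ∨ y = d) (hz : z = a ∨ z = b ∨ z = c ∨ z = d) :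
    eK x y z = eZ (rank4 a b c d x) (rank4 a b c d y) (rank4 a b c d z) := by
  obtain ⟨lxy, exy⟩ := rank4_iff (a:=a) (b:=b) (c:=c) (d:=d) hx hy
  obtain ⟨lyz, eyz⟩ := rank4_iff (a:=a) (b:=b) (c:=c) (d:=d) hy hz
  obtain ⟨lxz, exz⟩ := rank4_iff (a:=a) (b:=b) (c:=c) (d:=d) hx hz
  have lzx : z < x ↔ rank4 a b c d z < rank4 a b c d x := (rank4_iff hz hx).1
  unfold eK eZ cyc
  simp only [exy, eyz, exz, lxy, lyz, lzx]
  split_ifs <;> rfl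

lemma eK_quad (a b c d : α) : eK b c d - eK a c d + eK a b d - eK a b c = 0 := by
  have m : ∀ w : α, w = a → (w = a ∨ w = b ∨ w = c ∨ w = d) := by tauto
  rw [eK_rank a b c d b c d (by tauto) (by tauto) (by tauto),
      eK_rank a b c d a c d (by tauto) (by tauto) (by tauto),
      eK_rank a b c d a b d (by tauto) (by tauto) (by tauto),
      eK_rank a b c d a b c (by tauto) (by tauto) (by tauto)]
  exact eZ_quad _ _ _ _
end

open Classical in
def sgnZ (x : ℝ) : ℤ := if 0 < x then 1 else if x < 0 then -1 else 0

lemma sgnZ_pos {x : ℝ} (h : 0 < x) : sgnZ x = 1 := by rw [sgnZ, if_pos h]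
lemma sgnZ_neg' {x : ℝ} (h : x < 0) : sgnZ x = -1 := by
  rw [sgnZ, if_neg (by linarith), if_pos h]
lemma sgnZ_zero' {x : ℝ} (h : x = 0) : sgnZ x = 0 := by
  rw [sgnZ, if_neg (by simp [h]), if_neg (by simp [h])]
lemma sgnZ_bound (x : ℝ) : -1 ≤ sgnZ x ∧ sgnZ x ≤ 1 := by
  unfold sgnZ; split_ifs <;> omega
lemma sgnZ_neg (x : ℝ) : sgnZ (-x) = - sgnZ x := by
  rcases lt_trichotomy x 0 with h|h|h
  · rw [sgnZ_neg' h, sgnZ_pos (by linarith : (0:ℝ) < -x)]; rfl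
  · rw [h]; norm_num [sgnZ_zero']
  · rw [sgnZ_pos h, sgnZ_neg' (by linarith)]
lemma sgnZ_mul_pos {p x : ℝ} (hp : 0 < p) : sgnZ (p * x) = sgnZ x := by
  rcases lt_trichotomy x 0 with h|h|h
  · rw [sgnZ_neg' h, sgnZ_neg' (by nlinarith)]
  · rw [h, mul_zero]
  · rw [sgnZ_pos h, sgnZ_pos (by nlinarith)]

lemma sin_neg_of_gt_pi {x : ℝ} (h1 : π < x) (h2 : x < 2*π) : Real.sin x < 0 := by
  have h3 : 0 < Real.sin (x - π) := sin_pos_of_pos_of_lt_pi (by linarith) (by linarith)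
  have : Real.sin ((x - π) + π) = - Real.sin (x - π) := Real.sin_add_pi _
  simp only [sub_add_cancel] at this
  linarith

lemma core_sum {θ1 θ2 θ3 : ℝ} (h1 : -π < θ1) (h3 : θ3 ≤ π) (h12 : θ1 < θ2) (h23 : θ2 < θ3) :
    1 ≤ sgnZ (Real.sin (θ2-θ1)) + sgnZ (Real.sin (θ3-θ2)) + sgnZ (Real.sin (θ1-θ3)) := by
  set a := θ2 - θ1 with ha
  set b := θ3 - θ2 with hb
  have hpi := pi_pos
  have hA : 0 < a := by simp [ha]; linarith
  have hB : 0 < b := by simp [hb]; linarith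
  have hab : a + b < 2*π := by simp [ha, hb]; linarith
  have h13 : θ1 - θ3 = -(a+b) := by ring
  rw [h13, Real.sin_neg, sgnZ_neg]
  rcases lt_trichotomy a π with hA2|hA2|hA2
  · have t1 : sgnZ (sin a) = 1 := sgnZ_pos (sin_pos_of_pos_of_lt_pi hA hA2)
    rcases lt_trichotomy b π with hB2|hB2|hB2
    · have t2 : sgnZ (sin b) = 1 := sgnZ_pos (sin_pos_of_pos_of_lt_pi hB hB2)
      have := (sgnZ_bound (Real.sin (a+b))).2
      omega
    · have t2 : sgnZ (sin b) = 0 := sgnZ_zero' (by rw [hB2]; exact Real.sin_pi)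
      have t3 : sgnZ (Real.sin (a+b)) = -1 := sgnZ_neg' (sin_neg_of_gt_pi (by linarith) hab)
      omega
    · have t2 : sgnZ (sin b) = -1 := sgnZ_neg' (sin_neg_of_gt_pi hB2 (by linarith))
      have t3 : sgnZ (Real.sin (a+b)) = -1 := sgnZ_neg' (sin_neg_of_gt_pi (by linarith) hab)
      omega
  · have t1 : sgnZ (sin a) = 0 := sgnZ_zero' (by rw [hA2]; exact Real.sin_pi)
    have t2 : sgnZ (sin b) = 1 := sgnZ_pos (sin_pos_of_pos_of_lt_pi hB (by linarith))
    have t3 : sgnZ (Real.sin (a+b)) = -1 := sgnZ_neg' (sin_neg_of_gt_pi (by linarith) hab)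
    omega
  · have t1 : sgnZ (sin a) = -1 := sgnZ_neg' (sin_neg_of_gt_pi hA2 (by linarith))
    have t2 : sgnZ (sin b) = 1 := sgnZ_pos (sin_pos_of_pos_of_lt_pi hB (by linarith))
    have t3 : sgnZ (Real.sin (a+b)) = -1 := sgnZ_neg' (sin_neg_of_gt_pi (by linarith) hab)
    omega


def angSum (θ1 θ2 θ3 : ℝ) : ℤ := sgnZ (Real.sin (θ2-θ1)) + sgnZ (Real.sin (θ3-θ2)) + sgnZ (Real.sin (θ1-θ3))

lemma angSum_swap (θ1 θ2 θ3 : ℝ) : angSum θ1 θ3 θ2 = - angSum θ1 θ2 θ3 := by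
  unfold angSum
  rw [show θ3 - θ1 = -(θ1-θ3) by ring, show θ2 - θ3 = -(θ3-θ2) by ring,
      show θ1 - θ2 = -(θ2-θ1) by ring]
  simp only [Real.sin_neg, sgnZ_neg]; ring

lemma bridgeAngles {θ1 θ2 θ3 : ℝ} (hl1 : -π < θ1) (hu1 : θ1 ≤ π) (hl2 : -π < θ2)
    (hu2 : θ2 ≤ π) (hl3 : -π < θ3) (hu3 : θ3 ≤ π) (h12 : θ1 ≠ θ2) (h23 : θ2 ≠ θ3)
    (h13 : θ1 ≠ θ3) : cyc θ1 θ2 θ3 ↔ 1 ≤ angSum θ1 θ2 θ3 := by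
  have fwd : ∀ a b c : ℝ, -π < a → a ≤ π → -π < b → b ≤ π → -π < c → c ≤ π →
      cyc a b c → 1 ≤ angSum a b c := by
    intro a b c la ua lb ub lc uc h
    rcases h with ⟨x, y⟩ | ⟨x, y⟩ | ⟨x, y⟩
    · exact core_sum la uc x y
    · have := core_sum lb ua x y
      unfold angSum at *; omega
    · have := core_sum lc ub x y
      unfold angSum at *; omega
  constructor
  · exact fwd θ1 θ2 θ3 hl1 hu1 hl2 hu2 hl3 hu3
  · intro h
    rcases cyc_total h12 h23 h13 with hc | hc
    · exact hc
    · exfalso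
      have := fwd θ1 θ3 θ2 hl1 hu1 hl3 hu3 hl2 hu2 hc
      rw [angSum_swap] at this; omega
def crx (z w : ℂ) : ℝ := z.re * w.im - z.im * w.re

lemma crx_eq_sin {z w : ℂ} (hz : z ≠ 0) (hw : w ≠ 0) :
    crx z w = ‖z‖ * ‖w‖ * Real.sin (arg w - arg z) := by
  rw [Real.sin_sub, Complex.sin_arg, Complex.sin_arg, Complex.cos_arg hz, Complex.cos_arg hw]
  have h1 : ‖z‖ ≠ 0 := norm_ne_zero_iff.mpr hz
  have h2 : ‖w‖ ≠ 0 := norm_ne_zero_iff.mpr hw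
  field_simp [crx]
  unfold crx
  ring

lemma sgnZ_crx_eq {z w : ℂ} (hz : z ≠ 0) (hw : w ≠ 0) :
    sgnZ (crx z w) = sgnZ (Real.sin (arg w - arg z)) := by
  rw [crx_eq_sin hz hw, sgnZ_mul_pos]
  exact mul_pos (norm_pos_iff.mpr hz) (norm_pos_iff.mpr hw)

lemma bridgeC {z1 z2 z3 : ℂ} (h1 : z1 ≠ 0) (h2 : z2 ≠ 0) (h3 : z3 ≠ 0)
    (h12 : arg z1 ≠ arg z2) (h23 : arg z2 ≠ arg z3) (h13 : arg z1 ≠ arg z3) :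
    cyc (arg z1) (arg z2) (arg z3) ↔ 1 ≤ sgnZ (crx z1 z2) + sgnZ (crx z2 z3) + sgnZ (crx z3 z1) := by
  rw [bridgeAngles (neg_pi_lt_arg z1) (arg_le_pi z1) (neg_pi_lt_arg z2) (arg_le_pi z2)
      (neg_pi_lt_arg z3) (arg_le_pi z3) h12 h23 h13]
  unfold angSum
  rw [sgnZ_crx_eq h1 h2, sgnZ_crx_eq h2 h3, sgnZ_crx_eq h3 h1]

abbrev M2 := Matrix (Fin 2) (Fin 2) ℝ
def zc (A : M2) : ℂ := ⟨A 0 0, A 1 0⟩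

lemma mul2 (G A : M2) (i j : Fin 2) : (G*A) i j = G i 0 * A 0 j + G i 1 * A 1 j := by
  rw [Matrix.mul_apply, Fin.sum_univ_two]

lemma zc_re (A : M2) : (zc A).re = A 0 0 := rfl
lemma zc_im (A : M2) : (zc A).im = A 1 0 := rfl

lemma zc_ne {A : M2} (hA : A.det ≠ 0) : zc A ≠ 0 := by
  intro h
  rw [Complex.ext_iff] at h
  simp only [zc_re, zc_im, Complex.zero_re, Complex.zero_im] at h
  apply hA
  rw [Matrix.det_fin_two, h.1, h.2]; ring

lemma arg_eq_iff_ray {z w : ℂ} (hz : z ≠ 0) (hw : w ≠ 0) :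
    arg z = arg w ↔ ∃ t : ℝ, 0 < t ∧ w = (t:ℂ) * z := by
  constructor
  · intro h
    refine ⟨‖w‖ / ‖z‖, div_pos (norm_pos_iff.mpr hw) (norm_pos_iff.mpr hz), ?_⟩
    have hz' := Complex.norm_mul_exp_arg_mul_I z
    have hw' := Complex.norm_mul_exp_arg_mul_I w
    have hz0 : (‖z‖ : ℂ) ≠ 0 := by
      exact_mod_cast norm_ne_zero_iff.mpr hz
    have key : ((‖w‖ : ℂ)/(‖z‖ : ℂ)) * ((‖z‖ : ℂ) * Complex.exp (arg z * Complex.I))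
        = (‖w‖ : ℂ) * Complex.exp (arg z * Complex.I) := by
      rw [← mul_assoc, div_mul_cancel₀ _ hz0]
    rw [Complex.ofReal_div]
    calc w = (‖w‖ : ℂ) * Complex.exp (arg w * Complex.I) := hw'.symm
      _ = (‖w‖ : ℂ) * Complex.exp (arg z * Complex.I) := by rw [h]
      _ = ((‖w‖ : ℂ)/(‖z‖ : ℂ)) * ((‖z‖ : ℂ) * Complex.exp (arg z * Complex.I)) := key.symm
      _ = ((‖w‖ : ℂ)/(‖z‖ : ℂ)) * z := by rw [hz']
  · rintro ⟨t, ht, rfl⟩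
    rw [Complex.arg_real_mul z ht]

lemma col1_rel {A B G : M2} {t : ℝ} (h0 : B 0 0 = t * A 0 0) (h1 : B 1 0 = t * A 1 0) :
    (G*B) 0 0 = t * (G*A) 0 0 ∧ (G*B) 1 0 = t * (G*A) 1 0 := by
  constructor <;> · rw [mul2, mul2, h0, h1]; ring

lemma zc_eq_ray {A B : M2} {t : ℝ} (h0 : B 0 0 = t * A 0 0) (h1 : B 1 0 = t * A 1 0) :
    zc B = (t:ℂ) * zc A := by
  rw [Complex.ext_iff]
  constructor
  · simp [zc_re, Complex.ofReal_re, h0]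
  · simp [zc_im, h1, Complex.mul_im]

lemma ray_of_zc_eq {A B : M2} {t : ℝ} (h : zc B = (t:ℂ) * zc A) :
    B 0 0 = t * A 0 0 ∧ B 1 0 = t * A 1 0 := by
  rw [Complex.ext_iff] at h
  simp only [zc_re, zc_im, Complex.mul_re, Complex.mul_im, Complex.ofReal_re,
    Complex.ofReal_im] at h
  constructor <;> [skip; skip] <;> [exact h.1.trans (by ring); exact h.2.trans (by ring)]

lemma argL {G A B : M2} (hG : G.det ≠ 0) (hA : A.det ≠ 0) (hB : B.det ≠ 0) :
    arg (zc (G*A)) = arg (zc (G*B)) ↔ arg (zc A) = arg (zc B) := by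
  have hGA : (G*A).det ≠ 0 := by rw [Matrix.det_mul]; exact mul_ne_zero hG hA
  have hGB : (G*B).det ≠ 0 := by rw [Matrix.det_mul]; exact mul_ne_zero hG hB
  constructor
  · intro h
    obtain ⟨t, ht, hw⟩ := (arg_eq_iff_ray (zc_ne hGA) (zc_ne hGB)).mp h
    obtain ⟨e0, e1⟩ := ray_of_zc_eq hw
    rw [mul2, mul2] at e0 e1
    have p0 : G 0 0 * (B 0 0 - t * A 0 0) + G 0 1 * (B 1 0 - t * A 1 0) = 0 := by linarith
    have p1 : G 1 0 * (B 0 0 - t * A 0 0) + G 1 1 * (B 1 0 - t * A 1 0) = 0 := by linarith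
    have hd : G.det = G 0 0 * G 1 1 - G 0 1 * G 1 0 := Matrix.det_fin_two G
    have q0 : G.det * (B 0 0 - t * A 0 0) = 0 := by
      rw [hd]; linear_combination G 1 1 * p0 - G 0 1 * p1
    have q1 : G.det * (B 1 0 - t * A 1 0) = 0 := by
      rw [hd]; linear_combination (- G 1 0) * p0 + G 0 0 * p1
    have r0 : B 0 0 = t * A 0 0 := by
      rcases mul_eq_zero.mp q0 with h'|h'
      · exact absurd h' hG
      · linarith
    have r1 : B 1 0 = t * A 1 0 := by
      rcases mul_eq_zero.mp q1 with h'|h'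
      · exact absurd h' hG
      · linarith
    exact (arg_eq_iff_ray (zc_ne hA) (zc_ne hB)).mpr ⟨t, ht, zc_eq_ray r0 r1⟩
  · intro h
    obtain ⟨t, ht, hw⟩ := (arg_eq_iff_ray (zc_ne hA) (zc_ne hB)).mp h
    obtain ⟨e0, e1⟩ := ray_of_zc_eq hw
    obtain ⟨f0, f1⟩ := col1_rel (G := G) e0 e1
    exact (arg_eq_iff_ray (zc_ne hGA) (zc_ne hGB)).mpr ⟨t, ht, zc_eq_ray f0 f1⟩

lemma crx_mulG (G A B : M2) : crx (zc (G*A)) (zc (G*B)) = G.det * crx (zc A) (zc B) := by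
  simp only [crx, zc_re, zc_im, mul2, Matrix.det_fin_two]
  ring

def radM (A : M2) : ℝ := ‖zc A‖
def bcM (A : M2) : ℝ := A 0 0 * A 0 1 + A 1 0 * A 1 1
def tailK (A : M2) : ℝ ×ₗ (ℝ ×ₗ ℝ) := toLex (radM A, toLex (A.det, bcM A))

lemma lex3_lt_iff (r1 d1 b1 r2 d2 b2 : ℝ) :
    toLex (r1, toLex (d1,b1)) < toLex (r2, toLex (d2,b2)) ↔
      (r1<r2 ∨ (r1=r2 ∧ (d1<d2 ∨ (d1=d2 ∧ b1<b2)))) := by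
  simp [Prod.Lex.lt_iff]

lemma radM_pos {A : M2} (hA : A.det ≠ 0) : 0 < radM A := norm_pos_iff.mpr (zc_ne hA)

lemma radM_ray {A B : M2} {t : ℝ} (ht : 0 < t) (h0 : B 0 0 = t * A 0 0)
    (h1 : B 1 0 = t * A 1 0) : radM B = t * radM A := by
  unfold radM
  rw [zc_eq_ray h0 h1]
  rw [norm_mul, Complex.norm_real, Real.norm_eq_abs, abs_of_pos ht]

lemma tail_iff {G A B : M2} (hG : 0 < G.det) (hA : A.det ≠ 0) (hB : B.det ≠ 0)
    (h : arg (zc A) = arg (zc B)) :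
    tailK (G*A) < tailK (G*B) ↔ tailK A < tailK B := by
  have hGne : G.det ≠ 0 := ne_of_gt hG
  have hGA : (G*A).det ≠ 0 := by rw [Matrix.det_mul]; exact mul_ne_zero hGne hA
  have hGB : (G*B).det ≠ 0 := by rw [Matrix.det_mul]; exact mul_ne_zero hGne hB
  obtain ⟨t, ht, hw⟩ := (arg_eq_iff_ray (zc_ne hA) (zc_ne hB)).mp h
  obtain ⟨e0, e1⟩ := ray_of_zc_eq hw
  obtain ⟨f0, f1⟩ := col1_rel (G := G) e0 e1
  have hrA := radM_pos hA
  have hrGA := radM_pos hGA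
  have hrB : radM B = t * radM A := radM_ray ht e0 e1
  have hrGB : radM (G*B) = t * radM (G*A) := radM_ray ht f0 f1
  have F1 : radM (G*A) < radM (G*B) ↔ radM A < radM B := by
    rw [hrB, hrGB]
    constructor <;> intro h' <;> nlinarith
  have F1e : radM (G*A) = radM (G*B) ↔ radM A = radM B := by
    rw [hrB, hrGB]
    constructor <;> intro h' <;> nlinarith
  have F2 : (G*A).det < (G*B).det ↔ A.det < B.det := by
    rw [Matrix.det_mul, Matrix.det_mul]
    exact mul_lt_mul_iff_right₀ hG
  have F2e : (G*A).det = (G*B).det ↔ A.det = B.det := by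
    rw [Matrix.det_mul, Matrix.det_mul]
    constructor
    · intro h'; exact mul_left_cancel₀ hGne h'
    · intro h'; rw [h']
  have F3 : radM A = radM B → A.det = B.det →
      ((bcM (G*A) < bcM (G*B)) ↔ (bcM A < bcM B)) := by
    intro hre hde
    have ht1 : t = 1 := by
      rw [hrB] at hre
      have : (t - 1) * radM A = 0 := by linarith
      rcases mul_eq_zero.mp this with h'|h'
      · linarith
      · exact absurd h' (ne_of_gt hrA)
    rw [ht1, one_mul] at e0 e1
    -- second column relation via τ
    have hcol : A 0 0 ≠ 0 ∨ A 1 0 ≠ 0 := by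
      by_contra h'
      push_neg at h'
      apply hA
      rw [Matrix.det_fin_two, h'.1, h'.2]; ring
    have hdet : A 0 0 * (B 1 1 - A 1 1) = A 1 0 * (B 0 1 - A 0 1) := by
      have dA := Matrix.det_fin_two A
      have dB := Matrix.det_fin_two B
      rw [dA, dB, e0, e1] at hde
      linarith
    obtain ⟨τ, g0, g1⟩ : ∃ τ : ℝ, B 0 1 = A 0 1 + τ * A 0 0 ∧ B 1 1 = A 1 1 + τ * A 1 0 := by
      rcases hcol with h'|h'
      · refine ⟨(B 0 1 - A 0 1)/(A 0 0), by field_simp; ring, ?_⟩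
        field_simp
        linear_combination hdet
      · refine ⟨(B 1 1 - A 1 1)/(A 1 0), ?_, by field_simp; ring⟩
        field_simp
        linear_combination -hdet
    have S1 : bcM B = bcM A + τ * (A 0 0 ^ 2 + A 1 0 ^ 2) := by
      unfold bcM
      rw [e0, e1, g0, g1]; ring
    have S2 : bcM (G*B) = bcM (G*A) + τ * ((G*A) 0 0 ^ 2 + (G*A) 1 0 ^ 2) := by
      unfold bcM
      simp only [mul2, e0, e1, g0, g1]
      ring
    have P1 : 0 < A 0 0 ^ 2 + A 1 0 ^ 2 := by
      rcases hcol with h'|h' <;> positivity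
    have P2 : 0 < (G*A) 0 0 ^ 2 + (G*A) 1 0 ^ 2 := by
      have hz := zc_ne hGA
      have : (G*A) 0 0 ≠ 0 ∨ (G*A) 1 0 ≠ 0 := by
        by_contra h'
        push_neg at h'
        exact hz (by rw [Complex.ext_iff]; exact ⟨h'.1, h'.2⟩)
      rcases this with h'|h' <;> positivity
    rw [S1, S2]
    constructor <;> intro h' <;> nlinarith
  -- assembly
  unfold tailK
  rw [lex3_lt_iff, lex3_lt_iff]
  constructor
  · rintro (h'|⟨hre,(h'|⟨hde,h'⟩)⟩)
    · exact Or.inl (F1.mp h')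
    · exact Or.inr ⟨F1e.mp hre, Or.inl (F2.mp h')⟩
    · exact Or.inr ⟨F1e.mp hre, Or.inr ⟨F2e.mp hde, (F3 (F1e.mp hre) (F2e.mp hde)).mp h'⟩⟩
  · rintro (h'|⟨hre,(h'|⟨hde,h'⟩)⟩)
    · exact Or.inl (F1.mpr h')
    · exact Or.inr ⟨F1e.mpr hre, Or.inl (F2.mpr h')⟩
    · exact Or.inr ⟨F1e.mpr hre, Or.inr ⟨F2e.mpr hde, (F3 hre hde).mpr h'⟩⟩

def keyM (A : M2) : ℝ ×ₗ (ℝ ×ₗ (ℝ ×ₗ ℝ)) := toLex ((zc A).arg, tailK A)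

lemma keyM_inj {A B : M2} (hA : A.det ≠ 0) (hB : B.det ≠ 0) (h : keyM A = keyM B) : A = B := by
  unfold keyM tailK at h
  have h1 : (zc A).arg = (zc B).arg := congrArg (fun p => (ofLex p).1) h
  have h2 : radM A = radM B := congrArg (fun p => (ofLex (ofLex p).2).1) h
  have h3 : A.det = B.det := congrArg (fun p => (ofLex (ofLex (ofLex p).2).2).1) h
  have h4 : bcM A = bcM B := congrArg (fun p => (ofLex (ofLex (ofLex p).2).2).2) h
  obtain ⟨t, ht, hw⟩ := (arg_eq_iff_ray (zc_ne hA) (zc_ne hB)).mp h1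
  obtain ⟨e0, e1⟩ := ray_of_zc_eq hw
  have ht1 : t = 1 := by
    have := radM_ray ht e0 e1
    have hrA := radM_pos hA
    rw [this] at h2
    have h5 : (t - 1) * radM A = 0 := by linarith
    rcases mul_eq_zero.mp h5 with h'|h'
    · linarith
    · exact absurd h' (ne_of_gt hrA)
  rw [ht1, one_mul] at e0 e1
  have hxy : 0 < A 0 0 ^ 2 + A 1 0 ^ 2 := by
    have : A 0 0 ≠ 0 ∨ A 1 0 ≠ 0 := by
      by_contra h'
      push_neg at h'
      exact hA (by rw [Matrix.det_fin_two, h'.1, h'.2]; ring)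
    rcases this with h'|h' <;> positivity
  have hbc : A 0 0 * (B 0 1 - A 0 1) + A 1 0 * (B 1 1 - A 1 1) = 0 := by
    unfold bcM at h4; rw [e0, e1] at h4; linarith
  have hdt : A 0 0 * (B 1 1 - A 1 1) - A 1 0 * (B 0 1 - A 0 1) = 0 := by
    rw [Matrix.det_fin_two, Matrix.det_fin_two, e0, e1] at h3
    linarith
  have p0 : B 0 1 = A 0 1 := by
    have : (A 0 0 ^ 2 + A 1 0 ^ 2) * (B 0 1 - A 0 1) = 0 := by
      linear_combination A 0 0 * hbc - A 1 0 * hdt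
    rcases mul_eq_zero.mp this with h'|h'
    · linarith
    · linarith
  have p1 : B 1 1 = A 1 1 := by
    have : (A 0 0 ^ 2 + A 1 0 ^ 2) * (B 1 1 - A 1 1) = 0 := by
      linear_combination A 1 0 * hbc + A 0 0 * hdt
    rcases mul_eq_zero.mp this with h'|h'
    · linarith
    · linarith
  ext i j
  fin_cases i <;> fin_cases j <;> simp [e0, e1, p0, p1]

lemma cyc_key_inv {Gm A B C : M2} (hG : 0 < Gm.det) (hA : A.det ≠ 0) (hB : B.det ≠ 0)
    (hC : C.det ≠ 0) :
    cyc (keyM (Gm*A)) (keyM (Gm*B)) (keyM (Gm*C)) ↔ cyc (keyM A) (keyM B) (keyM C) := by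
  have hGne : Gm.det ≠ 0 := ne_of_gt hG
  have hGA : (Gm*A).det ≠ 0 := by rw [Matrix.det_mul]; exact mul_ne_zero hGne hA
  have hGB : (Gm*B).det ≠ 0 := by rw [Matrix.det_mul]; exact mul_ne_zero hGne hB
  have hGC : (Gm*C).det ≠ 0 := by rw [Matrix.det_mul]; exact mul_ne_zero hGne hC
  have LAB := argL (A := A) (B := B) hGne hA hB
  have LBC := argL (A := B) (B := C) hGne hB hC
  have LAC := argL (A := A) (B := C) hGne hA hC
  unfold keyM
  by_cases h1 : (zc A).arg = (zc B).arg
  · by_cases h2 : (zc B).arg = (zc C).arg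
    · -- all three rays equal
      have h3 : (zc A).arg = (zc C).arg := h1.trans h2
      have g1 : (zc (Gm*A)).arg = (zc (Gm*B)).arg := LAB.mpr h1
      have g2 : (zc (Gm*B)).arg = (zc (Gm*C)).arg := LBC.mpr h2
      rw [show (zc B).arg = (zc A).arg from h1.symm,
          show (zc C).arg = (zc A).arg from h3.symm,
          show (zc (Gm*B)).arg = (zc (Gm*A)).arg from g1.symm,
          show (zc (Gm*C)).arg = (zc (Gm*A)).arg from (g1.trans g2).symm,
          cyc_lex_all, cyc_lex_all]
      unfold cyc
      rw [tail_iff hG hA hB h1, tail_iff hG hB hC h2, tail_iff hG hC hA h3.symm]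
    · -- A,B same ray, C different
      have h3 : (zc A).arg ≠ (zc C).arg := fun h => h2 (h1.symm.trans h)
      have g1 : (zc (Gm*A)).arg = (zc (Gm*B)).arg := LAB.mpr h1
      have g3 : (zc (Gm*A)).arg ≠ (zc (Gm*C)).arg := fun h => h3 (LAC.mp h)
      rw [show (zc B).arg = (zc A).arg from h1.symm,
          show (zc (Gm*B)).arg = (zc (Gm*A)).arg from g1.symm,
          cyc_lex_pair _ _ _ g3, cyc_lex_pair _ _ _ h3]
      exact tail_iff hG hA hB h1
  · by_cases h2 : (zc B).arg = (zc C).arg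
    · -- B,C same ray, A different
      have g2 : (zc (Gm*B)).arg = (zc (Gm*C)).arg := LBC.mpr h2
      have h1' : (zc B).arg ≠ (zc A).arg := fun h => h1 h.symm
      have g1' : (zc (Gm*B)).arg ≠ (zc (Gm*A)).arg := fun h => h1' ((LAB.mp h.symm).symm)
      rw [cyc_rot, cyc_rot (toLex ((zc A).arg, tailK A))]
      rw [show (zc C).arg = (zc B).arg from h2.symm,
          show (zc (Gm*C)).arg = (zc (Gm*B)).arg from g2.symm,
          cyc_lex_pair _ _ _ g1', cyc_lex_pair _ _ _ h1']
      exact tail_iff hG hB hC h2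
    · by_cases h3 : (zc A).arg = (zc C).arg
      · -- A,C same ray, B different
        have g3 : (zc (Gm*A)).arg = (zc (Gm*C)).arg := LAC.mpr h3
        have h3' : (zc C).arg ≠ (zc B).arg := fun h => h2 h.symm
        have g3' : (zc (Gm*C)).arg ≠ (zc (Gm*B)).arg := fun h => h3' ((LBC.mp h.symm).symm)
        rw [cyc_rot, cyc_rot, cyc_rot (toLex ((zc A).arg, tailK A)),
            cyc_rot (toLex ((zc B).arg, tailK B))]
        rw [show (zc A).arg = (zc C).arg from h3,
            show (zc (Gm*A)).arg = (zc (Gm*C)).arg from g3,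
            cyc_lex_pair _ _ _ g3', cyc_lex_pair _ _ _ h3']
        exact tail_iff hG hC hA h3.symm
      · -- all rays distinct
        have g1 : (zc (Gm*A)).arg ≠ (zc (Gm*B)).arg := fun h => h1 (LAB.mp h)
        have g2 : (zc (Gm*B)).arg ≠ (zc (Gm*C)).arg := fun h => h2 (LBC.mp h)
        have g3 : (zc (Gm*A)).arg ≠ (zc (Gm*C)).arg := fun h => h3 (LAC.mp h)
        rw [cyc_lex_of_ne _ _ _ g1 g2 g3, cyc_lex_of_ne _ _ _ h1 h2 h3]
        rw [bridgeC (zc_ne hGA) (zc_ne hGB) (zc_ne hGC) g1 g2 g3,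
            bridgeC (zc_ne hA) (zc_ne hB) (zc_ne hC) h1 h2 h3]
        have sAB : sgnZ (crx (zc (Gm*A)) (zc (Gm*B))) = sgnZ (crx (zc A) (zc B)) := by
          rw [crx_mulG]; exact sgnZ_mul_pos hG
        have sBC : sgnZ (crx (zc (Gm*B)) (zc (Gm*C))) = sgnZ (crx (zc B) (zc C)) := by
          rw [crx_mulG]; exact sgnZ_mul_pos hG
        have sCA : sgnZ (crx (zc (Gm*C)) (zc (Gm*A))) = sgnZ (crx (zc C) (zc A)) := by
          rw [crx_mulG]; exact sgnZ_mul_pos hG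
        rw [sAB, sBC, sCA]

abbrev GP := Matrix.GLPos (Fin 2) ℝ

def matG (g : GP) : M2 := ((g : GL (Fin 2) ℝ) : M2)

lemma matG_mul (g h : GP) : matG (g*h) = matG g * matG h := by simp [matG]

lemma matG_det_pos (g : GP) : 0 < (matG g).det := by
  have := (Matrix.mem_glpos _).mp g.prop
  simpa [matG, Matrix.GeneralLinearGroup.val_det_apply] using this

def keyG (g : GP) : ℝ ×ₗ (ℝ ×ₗ (ℝ ×ₗ ℝ)) := keyM (matG g)

lemma keyG_inj {g h : GP} : keyG g = keyG h ↔ g = h := by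
  constructor
  · intro e
    have := keyM_inj (ne_of_gt (matG_det_pos g)) (ne_of_gt (matG_det_pos h)) e
    exact Subtype.ext (Units.ext this)
  · rintro rfl; rfl

open Classical in
def eGL (a b c : GP) : ℤ := eK (keyG a) (keyG b) (keyG c)

end
end CircGL

/-- The group `GL⁺(2, ℝ)` of 2×2 real matrices with positive determinant is circularly
orderable. -/
theorem glPos_two_circularlyOrderable :
    CircularlyOrderable (Matrix.GLPos (Fin 2) ℝ) := by
  classical
  refine ⟨eGL, ?_, ?_, ?_, ?_⟩
  · intro a b c hab hbc hac
    unfold eGL eK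
    rw [if_neg (by
      rintro (h | h | h)
      exacts [hab (keyG_inj.mp h), hbc (keyG_inj.mp h),
        hac (keyG_inj.mp h)])]
    by_cases h : cyc (keyG a) (keyG b) (keyG c)
    · left; rw [if_pos h]
    · right; rw [if_neg h]
  · intro a b c h
    unfold eGL eK
    rw [if_pos (by
      rcases h with h | h | h
      exacts [Or.inl (keyG_inj.mpr h), Or.inr (Or.inl (keyG_inj.mpr h)),
        Or.inr (Or.inr (keyG_inj.mpr h))])]
  · intro g0 g1 g2 g3
    exact eK_quad (keyG g0) (keyG g1) (keyG g2) (keyG g3)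
  · intro g a b c hab hbc hac
    unfold eGL eK
    have iffc : cyc (keyG (g*a)) (keyG (g*b)) (keyG (g*c)) ↔
        cyc (keyG a) (keyG b) (keyG c) := by
      unfold keyG
      rw [matG_mul, matG_mul, matG_mul]
      exact cyc_key_inv (matG_det_pos g) (ne_of_gt (matG_det_pos a))
        (ne_of_gt (matG_det_pos b)) (ne_of_gt (matG_det_pos c))
    have c1 : ¬(keyG (g*a) = keyG (g*b) ∨ keyG (g*b) = keyG (g*c) ∨
        keyG (g*a) = keyG (g*c)) := by
      rintro (h | h | h)
      exacts [hab (mul_left_cancel (keyG_inj.mp h)),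
        hbc (mul_left_cancel (keyG_inj.mp h)),
        hac (mul_left_cancel (keyG_inj.mp h))]
    have c2 : ¬(keyG a = keyG b ∨ keyG b = keyG c ∨
        keyG a = keyG c) := by
      rintro (h | h | h)
      exacts [hab (keyG_inj.mp h), hbc (keyG_inj.mp h), hac (keyG_inj.mp h)]
    rw [if_neg c1, if_neg c2]
    by_cases hc : cyc (keyG a) (keyG b) (keyG c)
    · rw [if_pos (iffc.mpr hc), if_pos hc]
    · rw [if_neg (fun h => hc (iffc.mp h)), if_neg hc]
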